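/- For every odd integer n ≥ 1 and every integer k ≥ 1, the recursion I_{n,k} = −(2k(2k+1)/n²)·I_{n,k−1} + δ(n)·((2k+1)/n²)·(π/2)^{2k} holds. -/

import Mathlib

open Real MeasureTheory

/-- `I_{n,k} = ∫₀^{π/2} t^{2k+1} sin(nt) dt`. -/
noncomputable def I (n k : ℕ) : ℝ :=
  ∫ t in (0:ℝ)..(π / 2), t ^ (2 * k + 1) * Real.sin ((n : ℝ) * t)

/-- `δ(n) = 1` if `n ≡ 1 (mod 4)`, `δ(n) = -1` if `n ≡ 3 (mod 4)`. -/
noncomputable def delta (n : ℕ) : ℝ := if n % 4 = 1 then 1 else -1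

/-- For odd `n ≥ 1` and `k ≥ 1`:
`I_{n,k} = -(2k(2k+1)/n²) I_{n,k-1} + δ(n) ((2k+1)/n²) (π/2)^{2k}`. -/
theorem I_recursion (n k : ℕ) (hn : 1 ≤ n) (hno : Odd n) (hk : 1 ≤ k) :
    I n k = -((2 * (k : ℝ) * (2 * (k : ℝ) + 1)) / (n : ℝ) ^ 2) * I n (k - 1)
      + delta n * ((2 * (k : ℝ) + 1) / (n : ℝ) ^ 2) * (π / 2) ^ (2 * k) := by
  obtain ⟨j, rfl⟩ : ∃ j, k = j + 1 := ⟨k - 1, by omega⟩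
  obtain ⟨l, hl⟩ := hno
  have hln : n = 2 * l + 1 := by omega
  have hn0 : (n : ℝ) ≠ 0 := by positivity
  -- trig values at n*(π/2)
  have hsplit : (n : ℝ) * (π / 2) = (l : ℝ) * π + π / 2 := by
    rw [hln]; push_cast; ring
  have hcos : Real.cos ((n : ℝ) * (π / 2)) = 0 := by
    rw [hsplit, Real.cos_add_pi_div_two, Real.sin_nat_mul_pi, neg_zero]
  have hsin : Real.sin ((n : ℝ) * (π / 2)) = delta n := by
    rw [hsplit, Real.sin_add_pi_div_two]
    have : Real.cos ((l : ℝ) * π) = (-1 : ℝ) ^ l := by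
      have := Real.cos_nat_mul_pi_sub 0 l
      simpa using this
    rw [this, delta]
    rcases Nat.even_or_odd l with he | he
    · have h4 : n % 4 = 1 := by obtain ⟨m, hm⟩ := he; omega
      rw [he.neg_one_pow, if_pos h4]
    · have h4 : n % 4 = 3 := by obtain ⟨m, hm⟩ := he; omega
      rw [he.neg_one_pow, if_neg (by omega)]
  -- antiderivative
  set F : ℝ → ℝ := fun t =>
    -t ^ (2 * j + 3) * Real.cos ((n : ℝ) * t) / n
      + (2 * (j : ℝ) + 3) * t ^ (2 * j + 2) * Real.sin ((n : ℝ) * t) / (n : ℝ) ^ 2 with hF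
  have hder : ∀ t ∈ Set.uIcc (0:ℝ) (π/2),
      HasDerivAt F (t ^ (2 * j + 3) * Real.sin ((n : ℝ) * t)
        + ((2 * (j : ℝ) + 3) * (2 * (j : ℝ) + 2) / (n : ℝ) ^ 2)
          * (t ^ (2 * j + 1) * Real.sin ((n : ℝ) * t))) t := by
    intro t _
    have hnt : HasDerivAt (fun t : ℝ => (n : ℝ) * t) ((n : ℝ)) t := by
      simpa using (hasDerivAt_id t).const_mul (n : ℝ)
    have hc : HasDerivAt (fun t : ℝ => Real.cos ((n : ℝ) * t))
        (-Real.sin ((n : ℝ) * t) * (n : ℝ)) t :=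
      (Real.hasDerivAt_cos ((n : ℝ) * t)).comp t hnt
    have hs : HasDerivAt (fun t : ℝ => Real.sin ((n : ℝ) * t))
        (Real.cos ((n : ℝ) * t) * (n : ℝ)) t :=
      (Real.hasDerivAt_sin ((n : ℝ) * t)).comp t hnt
    have hp1 : HasDerivAt (fun t : ℝ => t ^ (2 * j + 3))
        ((2 * (j : ℝ) + 3) * t ^ (2 * j + 2)) t := by
      have := hasDerivAt_pow (2 * j + 3) t
      refine this.congr_deriv ?_
      rw [show 2 * j + 3 - 1 = 2 * j + 2 by omega]; push_cast; ring
    have hp2 : HasDerivAt (fun t : ℝ => t ^ (2 * j + 2))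
        ((2 * (j : ℝ) + 2) * t ^ (2 * j + 1)) t := by
      have := hasDerivAt_pow (2 * j + 2) t
      refine this.congr_deriv ?_
      rw [show 2 * j + 2 - 1 = 2 * j + 1 by omega]; push_cast; ring
    have h1 : HasDerivAt (fun t : ℝ => -t ^ (2 * j + 3) * Real.cos ((n : ℝ) * t) / n)
        ((-((2 * (j : ℝ) + 3) * t ^ (2 * j + 2)) * Real.cos ((n : ℝ) * t)
          + (-t ^ (2 * j + 3)) * (-Real.sin ((n : ℝ) * t) * (n : ℝ))) / n) t :=
      (hp1.neg.mul hc).div_const _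
    have h2 : HasDerivAt (fun t : ℝ =>
        (2 * (j : ℝ) + 3) * t ^ (2 * j + 2) * Real.sin ((n : ℝ) * t) / (n : ℝ) ^ 2)
        (((2 * (j : ℝ) + 3) * ((2 * (j : ℝ) + 2) * t ^ (2 * j + 1)) * Real.sin ((n : ℝ) * t)
          + (2 * (j : ℝ) + 3) * t ^ (2 * j + 2) * (Real.cos ((n : ℝ) * t) * (n : ℝ)))
          / (n : ℝ) ^ 2) t :=
      (((hp2.const_mul (2 * (j : ℝ) + 3)).mul hs)).div_const _
    have := h1.add h2
    refine this.congr_deriv ?_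
    have hpow : t ^ (2 * j + 3) = t ^ (2 * j + 1) * t ^ 2 := by
      rw [← pow_add]
    have hpow2 : t ^ (2 * j + 2) = t ^ (2 * j + 1) * t := by
      rw [← pow_succ]
    field_simp
    ring
  have hcont : ∀ m : ℕ, Continuous (fun t : ℝ => t ^ m * Real.sin ((n : ℝ) * t)) := by
    intro m; fun_prop
  have hint : IntervalIntegrable (fun t => t ^ (2 * j + 3) * Real.sin ((n : ℝ) * t)
        + ((2 * (j : ℝ) + 3) * (2 * (j : ℝ) + 2) / (n : ℝ) ^ 2)
          * (t ^ (2 * j + 1) * Real.sin ((n : ℝ) * t))) volume 0 (π / 2) := by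
    apply Continuous.intervalIntegrable
    fun_prop
  have key := intervalIntegral.integral_eq_sub_of_hasDerivAt hder hint
  rw [intervalIntegral.integral_add ((hcont _).intervalIntegrable _ _)
      (((hcont (2*j+1)).const_mul _).intervalIntegrable _ _),
    intervalIntegral.integral_const_mul] at key
  have hIk : I n (j + 1) = ∫ t in (0:ℝ)..(π/2), t ^ (2 * j + 3) * Real.sin ((n : ℝ) * t) := by
    rw [I]; norm_num [show 2 * (j + 1) + 1 = 2 * j + 3 by ring]
  have hIj : I n j = ∫ t in (0:ℝ)..(π/2), t ^ (2 * j + 1) * Real.sin ((n : ℝ) * t) := rfl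
  have hF0 : F 0 = 0 := by simp [hF]
  have hFπ : F (π / 2) = delta n * (2 * (j : ℝ) + 3) * (π / 2) ^ (2 * j + 2) / (n : ℝ) ^ 2 := by
    simp only [hF, hcos, hsin]
    ring
  rw [← hIk, ← hIj, hF0, hFπ, sub_zero] at key
  have hk1 : (j + 1 : ℕ) - 1 = j := by omega
  rw [hk1]
  have h2k : 2 * (j + 1) = 2 * j + 2 := by ring
  rw [h2k]
  push_cast
  have hn2 : (n : ℝ) ^ 2 ≠ 0 := pow_ne_zero _ hn0
  field_simp at key ⊢
  linarith [key]
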